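/- Let δ > 0 and let h_δ be the Huber function (h_δ(t) = t²/2 for |t| ≤ δ, and δ(|t| - δ/2) otherwise). Let a b : Fin n → ℝ both be monotone increasing. Then for every permutation σ of Fin n, ∑ i, h_δ(a(i) - b(i)) ≤ ∑ i, h_δ(a(σ(i)) - b(i)). -/

import Mathlib

noncomputable def huber (δ : ℝ) (t : ℝ) : ℝ :=
  if |t| ≤ δ then t ^ 2 / 2 else δ * (|t| - δ / 2)

lemma huber_eq_left {δ t : ℝ} (hδ : 0 < δ) (ht : t ≤ -δ) : huber δ t = δ * (-t - δ / 2) := by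
  rcases eq_or_lt_of_le ht with rfl | h
  · rw [huber, abs_of_nonpos (by linarith), if_pos (by linarith)]; ring
  · rw [huber, abs_of_neg (by linarith), if_neg (by push_neg; linarith)]

lemma huber_eq_mid {δ t : ℝ} (ht : |t| ≤ δ) : huber δ t = t ^ 2 / 2 := if_pos ht

lemma huber_eq_right {δ t : ℝ} (hδ : 0 < δ) (ht : δ ≤ t) : huber δ t = δ * (t - δ / 2) := by
  rcases eq_or_lt_of_le ht with rfl | h
  · rw [huber, abs_of_nonneg (by linarith), if_pos (by linarith)]; ring
  · rw [huber, abs_of_pos (by linarith), if_neg (by push_neg; linarith)]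

lemma huber_hasDerivAt (δ : ℝ) (hδ : 0 < δ) (t : ℝ) :
    HasDerivAt (huber δ) (max (-δ) (min δ t)) t := by
  have hlin_r : ∀ x : ℝ, HasDerivAt (fun s : ℝ => δ * (s - δ / 2)) δ x := by
    intro x
    simpa using ((hasDerivAt_id x).sub_const (δ/2)).const_mul δ
  have hlin_l : ∀ x : ℝ, HasDerivAt (fun s : ℝ => δ * (-s - δ / 2)) (-δ) x := by
    intro x
    simpa using (((hasDerivAt_id x).neg).sub_const (δ/2)).const_mul δ
  have hsq : ∀ x : ℝ, HasDerivAt (fun s : ℝ => s ^ 2 / 2) x x := by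
    intro x
    simpa using (hasDerivAt_pow 2 x).div_const 2
  rcases lt_trichotomy t (-δ) with h | h | h
  · rw [min_eq_right (by linarith), max_eq_left (by linarith)]
    refine (hlin_l t).congr_of_eventuallyEq ?_
    filter_upwards [Iio_mem_nhds h] with s hs
    exact huber_eq_left hδ (le_of_lt hs)
  · subst h
    rw [min_eq_right (by linarith), max_eq_left le_rfl]
    have h1 : HasDerivWithinAt (huber δ) (-δ) (Set.Iic (-δ)) (-δ) :=
      ((hlin_l _).hasDerivWithinAt).congr (fun s hs => huber_eq_left hδ hs)
        (huber_eq_left hδ le_rfl)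
    have h2 : HasDerivWithinAt (huber δ) (-δ) (Set.Ici (-δ)) (-δ) := by
      have hd := (hsq (-δ)).hasDerivWithinAt (s := Set.Ici (-δ))
      refine hd.congr_of_eventuallyEq ?_ (huber_eq_mid (by rw [abs_neg, abs_of_pos hδ]))
      filter_upwards [nhdsWithin_le_nhds (Iio_mem_nhds (show (-δ:ℝ) < δ by linarith)),
        self_mem_nhdsWithin] with s hs hs'
      exact huber_eq_mid (abs_le.2 ⟨hs', le_of_lt hs⟩)
    have := h1.union h2
    rw [Set.Iic_union_Ici] at this
    exact this.hasDerivAt (by simp)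
  · rcases lt_trichotomy t δ with h' | h' | h'
    · rw [min_eq_right (by linarith), max_eq_right (by linarith)]
      refine (hsq t).congr_of_eventuallyEq ?_
      filter_upwards [Ioo_mem_nhds h h'] with s hs
      exact huber_eq_mid (abs_le.2 ⟨le_of_lt hs.1, le_of_lt hs.2⟩)
    · rw [h'] at *
      rw [min_eq_left le_rfl, max_eq_right (by linarith)]
      have h1 : HasDerivWithinAt (huber δ) δ (Set.Iic δ) δ := by
        have hd := (hsq δ).hasDerivWithinAt (s := Set.Iic δ)
        refine hd.congr_of_eventuallyEq ?_ (huber_eq_mid (by rw [abs_of_pos hδ]))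
        filter_upwards [nhdsWithin_le_nhds (Ioi_mem_nhds (show (-δ:ℝ) < δ by linarith)),
          self_mem_nhdsWithin] with s hs hs'
        exact huber_eq_mid (abs_le.2 ⟨le_of_lt hs, hs'⟩)
      have h2 : HasDerivWithinAt (huber δ) δ (Set.Ici δ) δ :=
        ((hlin_r _).hasDerivWithinAt).congr (fun s hs => huber_eq_right hδ hs)
          (huber_eq_right hδ le_rfl)
      have := h1.union h2
      rw [Set.Iic_union_Ici] at this
      exact this.hasDerivAt (by simp)
    · rw [min_eq_left (by linarith), max_eq_right (by linarith)]
      refine (hlin_r t).congr_of_eventuallyEq ?_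
      filter_upwards [Ioi_mem_nhds h'] with s hs
      exact huber_eq_right hδ (le_of_lt hs)

lemma huber_convexOn (δ : ℝ) (hδ : 0 < δ) : ConvexOn ℝ Set.univ (huber δ) := by
  have hdiff : Differentiable ℝ (huber δ) := fun t => (huber_hasDerivAt δ hδ t).differentiableAt
  have hderiv : deriv (huber δ) = fun t => max (-δ) (min δ t) := by
    funext t; exact (huber_hasDerivAt δ hδ t).deriv
  refine Monotone.convexOn_univ_of_deriv hdiff ?_
  rw [hderiv]
  exact fun x y h => max_le_max le_rfl (min_le_min le_rfl h)

lemma conv_comb {f : ℝ → ℝ} (hc : ConvexOn ℝ Set.univ f) {u v s : ℝ}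
    (hus : u ≤ s) (hsv : s ≤ v) : f s + f (u + v - s) ≤ f u + f v := by
  rcases eq_or_lt_of_le (hus.trans hsv) with rfl | huv
  · have : s = u := le_antisymm hsv hus
    subst this
    simp
  · set lam := (v - s) / (v - u) with hlam
    have hvu : 0 < v - u := by linarith
    have h0 : 0 ≤ lam := div_nonneg (by linarith) hvu.le
    have h1 : 0 ≤ 1 - lam := by
      rw [hlam, sub_nonneg, div_le_one hvu]; linarith
    have hl : lam * (v - u) = v - s := by rw [hlam]; exact div_mul_cancel₀ _ hvu.ne'
    have hs : s = lam * u + (1 - lam) * v := by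
      linear_combination hl
    have hs' : u + v - s = (1 - lam) * u + lam * v := by
      linear_combination (-1 : ℝ) * hl
    have e1 := hc.2 (Set.mem_univ u) (Set.mem_univ v) h0 h1 (by ring)
    have e2 := hc.2 (Set.mem_univ u) (Set.mem_univ v) h1 h0 (by ring)
    rw [smul_eq_mul, smul_eq_mul, smul_eq_mul, ← hs] at e1
    rw [smul_eq_mul, smul_eq_mul, smul_eq_mul, ← hs'] at e2
    simp only [smul_eq_mul] at e1 e2
    nlinarith [e1, e2]

lemma huber_exchange {δ : ℝ} (hδ : 0 < δ) {x x' y y' : ℝ} (hx : x ≤ x') (hy : y ≤ y') :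
    huber δ (x - y) + huber δ (x' - y') ≤ huber δ (x - y') + huber δ (x' - y) := by
  have h := conv_comb (huber_convexOn δ hδ) (u := x - y') (v := x' - y) (s := x - y)
    (by linarith) (by linarith)
  have e : (x - y') + (x' - y) - (x - y) = x' - y' := by ring
  rw [e] at h
  exact h

open Finset Equiv Equiv.Perm

theorem sorted_matching_huber (δ : ℝ) (hδ : 0 < δ) {n : ℕ}
    (a b : Fin n → ℝ) (ha : Monotone a) (hb : Monotone b)
    (σ : Equiv.Perm (Fin n)) :
    ∑ i, huber δ (a i - b i) ≤ ∑ i, huber δ (a (σ i) - b i) := by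
  classical
  suffices H : ∀ (s : Finset (Fin n)), ∀ σ : Equiv.Perm (Fin n), {x | σ x ≠ x} ⊆ ↑s →
      ∑ i ∈ s, huber δ (a i - b i) ≤ ∑ i ∈ s, huber δ (a (σ i) - b i) by
    exact H univ σ (by simp)
  intro s
  induction s using Finset.induction_on_max with
  | empty => intro σ hσ; simp
  | insert m s hmax hind =>
    intro σ hσ
    have hms : m ∉ s := fun h => lt_irrefl m (hmax m h)
    set τ : Equiv.Perm (Fin n) := σ.trans (Equiv.swap m (σ m)) with hτ
    have hτs : {x | τ x ≠ x} ⊆ ↑s := by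
      intro x hx
      simp only [hτ, Ne, Set.mem_setOf_eq, Equiv.coe_trans, Equiv.swap_comp_apply] at hx
      split_ifs at hx with h₁ h₂
      · obtain rfl | hax := eq_or_ne x m
        · contradiction
        · exact mem_of_mem_insert_of_ne (hσ fun h => hax <| h.symm.trans h₁) hax
      · exact (hx <| σ.injective h₂.symm).elim
      · exact mem_of_mem_insert_of_ne (hσ hx) (ne_of_apply_ne _ h₂)
    have hind' := hind τ hτs
    rw [sum_insert hms, sum_insert hms]
    obtain hσm | hσm := eq_or_ne (σ m) m
    · have hτσ : τ = σ := by rw [hτ, hσm, Equiv.swap_self]; rfl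
      rw [hτσ] at hind'
      rw [hσm]
      exact add_le_add_right hind' _
    -- σ m ≠ m
    have hσm_mem : σ m ∈ s := by
      refine mem_of_mem_insert_of_ne (hσ ?_) hσm
      simp only [Set.mem_setOf_eq]
      exact fun h => hσm (σ.injective h)
    set k : Fin n := σ⁻¹ m with hk
    have hkm : σ k = m := Equiv.Perm.eq_inv_iff_eq.mp rfl
    have hkne : k ≠ m := fun h => hσm (by rw [← h, hkm]; exact h.symm)
    have hks : k ∈ s := by
      refine mem_of_mem_insert_of_ne (hσ ?_) hkne
      simp only [Set.mem_setOf_eq, hkm]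
      exact hkne.symm
    have hτk : τ k = σ m := by simp [hτ, hkm, Equiv.swap_apply_left]
    have hτ_eq : ∀ i ∈ s.erase k, τ i = σ i := by
      intro i hi
      rw [mem_erase] at hi
      have h1 : σ i ≠ m := fun h => hi.1 (by rw [hk, ← h, Equiv.Perm.eq_inv_iff_eq])
      have h2 : σ i ≠ σ m := fun h => hms (by rw [σ.injective h] at hi; exact hi.2)
      simp [hτ, Equiv.swap_apply_of_ne_of_ne h1 h2]
    -- decompose sums over s via erase k
    rw [← Finset.add_sum_erase s (fun i => huber δ (a (τ i) - b i)) hks, hτk] at hind'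
    rw [← Finset.add_sum_erase s (fun i => huber δ (a (σ i) - b i)) hks, hkm]
    have hsum_eq : ∑ i ∈ s.erase k, huber δ (a (τ i) - b i)
        = ∑ i ∈ s.erase k, huber δ (a (σ i) - b i) :=
      Finset.sum_congr rfl fun i hi => by rw [hτ_eq i hi]
    rw [hsum_eq] at hind'
    -- key exchange
    have hx : a (σ m) ≤ a m := ha (hmax _ hσm_mem).le
    have hy : b k ≤ b m := hb (hmax _ hks).le
    have hex := huber_exchange hδ (x := a (σ m)) (x' := a m) (y := b k) (y' := b m) hx hy
    calc huber δ (a m - b m) + ∑ i ∈ s, huber δ (a i - b i)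
        ≤ huber δ (a m - b m) + (huber δ (a (σ m) - b k)
            + ∑ i ∈ s.erase k, huber δ (a (σ i) - b i)) := by linarith
      _ ≤ huber δ (a (σ m) - b m) + (huber δ (a m - b k)
            + ∑ i ∈ s.erase k, huber δ (a (σ i) - b i)) := by linarith
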